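/- Let N be a positive integer and suppose that for every integer n with 1 ≤ n ≤ N, both intervals [n², n(n+1)] and [n(n+1), (n+1)²] contain a prime. Then for every real α ≥ 2 and real x ≥ 1 with x^(α/2) < N, the interval [x^α, (x+1)^α] contains a prime. -/
import Mathlib


theorem stmt_3 (N : ℕ) (hN : 0 < N)
    (h : ∀ n : ℕ, 1 ≤ n → n ≤ N →
      (∃ p : ℕ, p.Prime ∧ n ^ 2 ≤ p ∧ p ≤ n * (n + 1)) ∧
      (∃ p : ℕ, p.Prime ∧ n * (n + 1) ≤ p ∧ p ≤ (n + 1) ^ 2)) :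
    ∀ α x : ℝ, 2 ≤ α → 1 ≤ x → x ^ (α / 2) < (N : ℝ) →
      ∃ p : ℕ, p.Prime ∧ x ^ α ≤ (p : ℝ) ∧ (p : ℝ) ≤ (x + 1) ^ α := by
  intro α x hα hx hxN
  set y := x ^ (α / 2) with hydef
  have hx0 : (0 : ℝ) ≤ x := by linarith
  have hy1 : (1 : ℝ) ≤ y := Real.one_le_rpow hx (by linarith)
  have hsq : y ^ 2 = x ^ α := by
    rw [hydef, ← Real.rpow_natCast (x ^ (α / 2)) 2, ← Real.rpow_mul hx0]
    norm_num
  have hup : (y + 1) ^ 2 ≤ (x + 1) ^ α := by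
    have h1 : y + 1 ≤ (x + 1) ^ (α / 2) := by
      have hnn := NNReal.add_rpow_le_rpow_add x.toNNReal 1 (p := α / 2) (by linarith)
      have hc := NNReal.coe_le_coe.mpr hnn
      simp only [NNReal.coe_rpow, NNReal.coe_add, NNReal.coe_one, NNReal.one_rpow,
        Real.coe_toNNReal x hx0] at hc
      simpa [hydef] using hc
    have h2 : ((x + 1) ^ (α / 2)) ^ 2 = (x + 1) ^ α := by
      rw [← Real.rpow_natCast ((x + 1) ^ (α / 2)) 2, ← Real.rpow_mul (by linarith)]
      norm_num
    have h0 : (0 : ℝ) ≤ y + 1 := by linarith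
    nlinarith [h1, h2]
  -- It suffices to find a prime in [y², (y+1)²]
  suffices hs : ∃ p : ℕ, p.Prime ∧ y ^ 2 ≤ (p : ℝ) ∧ (p : ℝ) ≤ (y + 1) ^ 2 by
    obtain ⟨p, hp, hp1, hp2⟩ := hs
    exact ⟨p, hp, by linarith [hsq.symm.le], by linarith⟩
  rcases le_or_gt (y ^ 2) 3 with h3 | h3
  · exact ⟨3, Nat.prime_three, by push_cast; linarith, by push_cast; nlinarith⟩
  · set n := ⌊y⌋₊ with hn
    have hn1 : 1 ≤ n := Nat.le_floor (by exact_mod_cast hy1)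
    have hnle : (n : ℝ) ≤ y := Nat.floor_le (by linarith)
    have hylt : y < (n : ℝ) + 1 := Nat.lt_floor_add_one y
    have hnN : n + 1 ≤ N := by
      have hlt : (n : ℝ) < (N : ℝ) := lt_of_le_of_lt hnle hxN
      have : n < N := by exact_mod_cast hlt
      omega
    rcases le_or_gt ((n : ℝ) + 1 / 2) y with hc | hc
    · -- use the first prime for n+1
      obtain ⟨q, hq, hq1, hq2⟩ := (h (n + 1) (by omega) hnN).1
      refine ⟨q, hq, ?_, ?_⟩
      · have : ((n + 1 : ℕ) : ℝ) ^ 2 ≤ (q : ℝ) := by exact_mod_cast hq1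
        push_cast at this
        nlinarith
      · have : (q : ℝ) ≤ ((n + 1 : ℕ) : ℝ) * ((n + 1 : ℕ) + 1) := by exact_mod_cast hq2
        push_cast at this
        nlinarith
    · -- use the second prime for n
      obtain ⟨p, hp, hp1, hp2⟩ := (h n hn1 (by omega)).2
      have hp1' : ((n : ℝ)) * ((n : ℝ) + 1) ≤ (p : ℝ) := by exact_mod_cast hp1
      have hp2' : (p : ℝ) ≤ ((n : ℝ) + 1) ^ 2 := by exact_mod_cast hp2
      refine ⟨p, hp, ?_, by nlinarith⟩
      rcases le_or_gt (y ^ 2) ((n : ℝ) * ((n : ℝ) + 1)) with h4 | h4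
      · linarith
      · -- y² > n(n+1), show p ≥ n(n+1)+1
        have hn2 : 2 ≤ n := by
          by_contra hcon
          have : n = 1 := by omega
          rw [this] at hc
          norm_num at hc
          nlinarith
        have hne : p ≠ n * (n + 1) := by
          intro heq
          have hdvd : n ∣ p := ⟨n + 1, heq⟩
          rcases (Nat.Prime.eq_one_or_self_of_dvd hp n hdvd) with h' | h'
          · omega
          · have hlt : n < n * (n + 1) := (Nat.lt_mul_iff_one_lt_right (by omega)).2 (by omega)
            omega
        have hge : n * (n + 1) + 1 ≤ p := by
          have : n * (n + 1) ≤ p := hp1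
          omega
        have hge' : ((n : ℝ)) * ((n : ℝ) + 1) + 1 ≤ (p : ℝ) := by exact_mod_cast hge
        have hy0 : (0 : ℝ) ≤ y := by linarith
        have hpl : y ^ 2 < ((n : ℝ) + 1 / 2) ^ 2 := by
          have := pow_lt_pow_left₀ hc hy0 two_ne_zero
          exact this
        have hexp : ((n : ℝ) + 1 / 2) ^ 2 = (n : ℝ) * ((n : ℝ) + 1) + 1 / 4 := by ring
        linarith
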